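/- For any i ∈ I and any homogeneous y ∈ U_q^-(g), one has L(f_i) E_ζ(y) = q^{−(α_i, wt(y))} ( −ζ_i E_ζ(e_i^*(y)) + E_ζ(y) L(f_i) ) in B_q(g), where E_ζ : U_q^-(g) → B_q(g) is the Q(q)-algebra homomorphism with E_ζ(f_i) = ζ_i e_i' and ζ_i = 1 − q_i². -/

import Mathlib

/- Common setting: a symmetrizable generalized Cartan matrix, the field `𝕂 = ℚ(q)`
(with `q = qv`), quantum integers, the negative half `Uq A` of the quantum group
presented by the `q`-Serre relations, its weight spaces, and the root-lattice pairing. -/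

set_option maxHeartbeats 1000000
set_option synthInstance.maxHeartbeats 400000

noncomputable section

structure GCM (I : Type) where
  c : I → I → ℤ
  d : I → ℤ
  d_pos : ∀ i, 0 < d i
  diag : ∀ i, c i i = 2
  offdiag : ∀ i j, i ≠ j → c i j ≤ 0
  dsymm : ∀ i j, d i * c i j = d j * c j i

abbrev 𝕂 : Type := RatFunc ℚ

/-- The indeterminate `q`. -/
def qv : 𝕂 := RatFunc.X

def qNum (t : 𝕂) (n : ℕ) : 𝕂 := (t ^ n - t⁻¹ ^ n) / (t - t⁻¹)

def qFact (t : 𝕂) (n : ℕ) : 𝕂 := ∏ k ∈ Finset.range n, qNum t (k + 1)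

def qBinom (t : 𝕂) (m k : ℕ) : 𝕂 := qFact t m / (qFact t k * qFact t (m - k))

variable {I : Type} [DecidableEq I]

/-- `q_i = q^{d_i}`. -/
def qd (A : GCM I) (i : I) : 𝕂 := qv ^ A.d i

/-- `ζ_i = 1 - q_i^2`. -/
def ze (A : GCM I) (i : I) : 𝕂 := 1 - qd A i ^ 2

/-- The `q`-Serre element `Σ_{k=0}^{b_{ij}} (-1)^k [b_{ij} choose k]_{q_i} a^k b a^{b_{ij}-k}`
for elements `a, b` of any `𝕂`-algebra, where `b_{ij} = 1 - c_{ij}`. -/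
def serreIn {R : Type} [Ring R] [Algebra 𝕂 R] (A : GCM I) (i j : I) (a b : R) : R :=
  ∑ k ∈ Finset.range ((1 - A.c i j).toNat + 1),
    ((-1 : 𝕂) ^ k * qBinom (qd A i) ((1 - A.c i j).toNat) k) •
      (a ^ k * b * a ^ ((1 - A.c i j).toNat - k))

/-- The `q`-Serre relations. -/
inductive URel (A : GCM I) : FreeAlgebra 𝕂 I → FreeAlgebra 𝕂 I → Prop
  | serre (i j : I) (h : i ≠ j) :
      URel A (serreIn A i j (FreeAlgebra.ι 𝕂 i) (FreeAlgebra.ι 𝕂 j)) 0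

/-- The negative half `U_q^-(g)`. -/
abbrev Uq (A : GCM I) : Type := RingQuot (URel A)

/-- The generator `f_i` of `U_q^-(g)`. -/
def fg (A : GCM I) (i : I) : Uq A :=
  RingQuot.mkAlgHom 𝕂 (URel A) (FreeAlgebra.ι 𝕂 i)

/-- The symmetric bilinear pairing on the root lattice, `(α_i, α_j) = d_i c_{ij}`. -/
def ip (A : GCM I) (β γ : I →₀ ℤ) : ℤ :=
  β.sum fun i a => γ.sum fun j b => a * b * (A.d i * A.c i j)

/-- The simple root `α_i` as an element of the root lattice. -/
def sr (i : I) : I →₀ ℤ := Finsupp.single i 1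

/-- The weight space of weight `β` of `U_q^-(g)`, where `wt (f_i) = -α_i`. -/
def Uwt (A : GCM I) (β : I →₀ ℤ) : Submodule 𝕂 (Uq A) :=
  Submodule.span 𝕂 {x | ∃ l : List I,
    -((l.map fun i => Finsupp.single i (1 : ℤ)).sum) = β ∧ x = (l.map (fg A)).prod}



set_option linter.unusedSectionVars false

lemma qv_ne_zero : (qv : 𝕂) ≠ 0 := RatFunc.X_ne_zero

lemma ip_eq (A : GCM I) (i : I) (γ : I →₀ ℤ) :
    ip A (sr i) γ = γ.sum fun j b => b * (A.d i * A.c i j) := by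
  unfold ip sr
  rw [Finsupp.sum_single_index]
  · exact Finsupp.sum_congr fun j _ => by ring
  · simp

lemma ip_zero (A : GCM I) (i : I) : ip A (sr i) 0 = 0 := by
  rw [ip_eq]; simp

lemma ip_sub_single (A : GCM I) (i j : I) (γ : I →₀ ℤ) :
    ip A (sr i) (γ - sr j) = ip A (sr i) γ - A.d i * A.c i j := by
  rw [ip_eq, ip_eq, Finsupp.sum_sub_index (fun a b₁ b₂ => by ring)]
  unfold sr
  rw [Finsupp.sum_single_index (by ring)]
  ring

lemma comm_e' (A : GCM I) (e' : I → Module.End 𝕂 (Uq A))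
    (he'f : ∀ i j u, e' i (fg A j * u) =
      (if i = j then u else 0) + qv ^ (-(A.d i * A.c i j)) • (fg A j * e' i u))
    (i j : I) :
    LinearMap.mul 𝕂 (Uq A) (fg A i) * e' j =
      qv ^ (A.d i * A.c i j) •
        (e' j * LinearMap.mul 𝕂 (Uq A) (fg A i)
          - (if i = j then (1 : Module.End 𝕂 (Uq A)) else 0)) := by
  have hd : A.d j * A.c j i = A.d i * A.c i j := (A.dsymm i j).symm
  have h1 : e' j * LinearMap.mul 𝕂 (Uq A) (fg A i) =
      (if i = j then (1 : Module.End 𝕂 (Uq A)) else 0) +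
        qv ^ (-(A.d i * A.c i j)) • (LinearMap.mul 𝕂 (Uq A) (fg A i) * e' j) := by
    ext u
    have := he'f j i u
    rw [hd] at this
    simp only [Module.End.mul_apply, LinearMap.mul_apply',
      LinearMap.add_apply, LinearMap.smul_apply, Module.End.one_apply, LinearMap.zero_apply]
    rw [this]
    congr 1
    by_cases hij : i = j <;> simp [hij, eq_comm]
  rw [h1, add_sub_cancel_left (if i = j then (1 : Module.End 𝕂 (Uq A)) else 0), smul_smul, ← zpow_add₀ qv_ne_zero]
  simp

lemma key (A : GCM I)
    (e' es : I → Module.End 𝕂 (Uq A))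
    (he'f : ∀ i j u, e' i (fg A j * u) =
      (if i = j then u else 0) + qv ^ (-(A.d i * A.c i j)) • (fg A j * e' i u))
    (hesone : ∀ i, es i 1 = 0)
    (hesf : ∀ i j u, es i (u * fg A j) =
      (if i = j then u else 0) + qv ^ (-(A.d i * A.c i j)) • (es i u * fg A j))
    (Eζ : Uq A →ₐ[𝕂] Module.End 𝕂 (Uq A))
    (hEζ : ∀ i, Eζ (fg A i) = ze A i • e' i)
    (i : I) (l : List I) :
    LinearMap.mul 𝕂 (Uq A) (fg A i) * Eζ ((l.map (fg A)).prod) =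
      qv ^ (-(ip A (sr i) (-((l.map fun j => Finsupp.single j (1 : ℤ)).sum)))) •
        ((-(ze A i)) • Eζ (es i ((l.map (fg A)).prod)) +
          Eζ ((l.map (fg A)).prod) * LinearMap.mul 𝕂 (Uq A) (fg A i)) := by
  induction l using List.reverseRecOn with
  | nil => simp [hesone, ip_zero]
  | append_singleton l j ih =>
    have hwt : -(((l ++ [j]).map fun j => Finsupp.single j (1 : ℤ)).sum)
        = -((l.map fun j => Finsupp.single j (1 : ℤ)).sum) - sr j := by
      simp [sr]; abel
    have hprod : ((l ++ [j]).map (fg A)).prod = (l.map (fg A)).prod * fg A j := by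
      simp
    rw [hwt, hprod, ip_sub_single]
    set L := LinearMap.mul 𝕂 (Uq A) (fg A i) with hLdef
    set U := Eζ ((l.map (fg A)).prod) with hUdef
    set S := Eζ (es i ((l.map (fg A)).prod)) with hSdef
    set p : ℤ := ip A (sr i) (-((l.map fun j => Finsupp.single j (1 : ℤ)).sum)) with hpdef
    set b : ℤ := A.d i * A.c i j with hbdef
    have hqb : (qv : 𝕂) ^ b ≠ 0 := zpow_ne_zero _ qv_ne_zero
    -- the commutation relation for L and Eζ (fg A j)
    have hbb : (qv : 𝕂) ^ b * qv ^ (-b) = 1 := by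
      rw [← zpow_add₀ qv_ne_zero]; simp
    have hc : L * Eζ (fg A j) =
        qv ^ b • (Eζ (fg A j) * L
          - ze A j • (if i = j then (1 : Module.End 𝕂 (Uq A)) else 0)) := by
      rw [hEζ j, mul_smul_comm, comm_e' A e' he'f i j, smul_comm]
      congr 1
      rw [smul_sub (ze A j) (e' j * LinearMap.mul 𝕂 (Uq A) (fg A i)), smul_mul_assoc]
    have hes : Eζ (es i ((l.map (fg A)).prod * fg A j)) =
        (if i = j then U else 0) + qv ^ (-b) • (S * Eζ (fg A j)) := by
      rw [hesf, map_add, map_smul, map_mul, apply_ite Eζ, map_zero]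
    have hexp : (qv : 𝕂) ^ (-(p - b)) = qv ^ (-p) * qv ^ b := by
      rw [← zpow_add₀ qv_ne_zero]; ring_nf
    rw [map_mul, ← mul_assoc, ih, hes, hexp, smul_mul_assoc, add_mul, smul_mul_assoc,
      mul_assoc, hc]
    have h1 : qv ^ (-p) * (qv ^ b * (-ze A i * qv ^ (-b))) = qv ^ (-p) * -ze A i := by
      rw [show (qv : 𝕂) ^ (-p) * (qv ^ b * (-ze A i * qv ^ (-b)))
          = (qv ^ b * qv ^ (-b)) * (qv ^ (-p) * -ze A i) from by ring, hbb, one_mul]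
    by_cases hij : i = j
    · subst hij
      simp only [if_pos rfl, if_true, eq_self_iff_true]
      simp only [smul_add, smul_sub, smul_smul, add_mul, smul_mul_assoc, mul_smul_comm,
        mul_add, mul_sub, mul_one, mul_zero, smul_zero, add_zero, zero_add, mul_assoc]
      rw [h1, show qv ^ (-p) * (qv ^ b * -ze A i) = -(qv ^ (-p) * (qv ^ b * ze A i)) from by
        ring, neg_smul (qv ^ (-p) * (qv ^ b * ze A i)) U]
      rw [mul_sub U (Eζ (fg A i) * L) (ze A i • 1), mul_smul_comm (ze A i) U 1, mul_one U,
        smul_sub (qv ^ (-p) * qv ^ b) (U * (Eζ (fg A i) * L)), smul_smul,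
        mul_assoc (qv ^ (-p)) (qv ^ b) (ze A i)]
      abel
    · simp only [if_neg hij]
      simp only [smul_add, smul_sub, smul_smul, add_mul, smul_mul_assoc, mul_smul_comm,
        mul_add, mul_sub, mul_one, mul_zero, smul_zero, add_zero, zero_add, mul_assoc]
      rw [sub_zero (Eζ (fg A j) * L), h1]

/-- for any `i ∈ I` and homogeneous `y` of weight `β`,
`L(f_i) E_ζ(y) = q^{-(α_i, wt y)} ( -ζ_i E_ζ(e_i^*(y)) + E_ζ(y) L(f_i) )` in `End (U_q^-(g))`,
where `E_ζ` is the algebra homomorphism with `E_ζ(f_i) = ζ_i e_i'` and `ζ_i = 1 - q_i²`.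
The operators `e_i'` and `e_i^*` are characterized as in the context, and `L(f_i)` is left
multiplication by `f_i`. -/
theorem statement4 (A : GCM I)
    (e' es : I → Module.End 𝕂 (Uq A))
    (he'one : ∀ i, e' i 1 = 0)
    (he'f : ∀ i j u, e' i (fg A j * u) =
      (if i = j then u else 0) + qv ^ (-(A.d i * A.c i j)) • (fg A j * e' i u))
    (hesone : ∀ i, es i 1 = 0)
    (hesf : ∀ i j u, es i (u * fg A j) =
      (if i = j then u else 0) + qv ^ (-(A.d i * A.c i j)) • (es i u * fg A j))
    (Eζ : Uq A →ₐ[𝕂] Module.End 𝕂 (Uq A))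
    (hEζ : ∀ i, Eζ (fg A i) = ze A i • e' i)
    (i : I) (β : I →₀ ℤ) (y : Uq A) (hy : y ∈ Uwt A β) :
    LinearMap.mul 𝕂 (Uq A) (fg A i) * Eζ y =
      qv ^ (-(ip A (sr i) β)) •
        ((-(ze A i)) • Eζ (es i y) + Eζ y * LinearMap.mul 𝕂 (Uq A) (fg A i)) := by
  induction hy using Submodule.span_induction with
  | mem x hx =>
    obtain ⟨l, hβ, rfl⟩ := hx
    rw [← hβ]
    exact key A e' es he'f hesone hesf Eζ hEζ i l
  | zero => simp
  | add x y hx hy ihx ihy =>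
    rw [map_add, mul_add, ihx, ihy, ← smul_add]
    congr 1
    rw [map_add, map_add, smul_add, add_mul]
    abel
  | smul a x hx ih =>
    rw [map_smul, map_smul, map_smul, mul_smul_comm, ih, smul_mul_assoc,
      smul_comm (-(ze A i)) a, ← smul_add, smul_comm a]

end
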